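/- Let k ≥ 1 and let u and v be words each of length at least 2k - 2 sharing a common prefix of length k - 1 and a common suffix of length k - 1. Then uv and vu are k-abelian equivalent. Consequently, for all words x and y, xuvy and xvuy are k-abelian equivalent. -/

import Mathlib

/-- The number of (possibly overlapping) occurrences of `z` as a factor of `u`. -/
def FactorCount {A : Type*} [DecidableEq A] (u z : List A) : ℕ :=
  (List.range (u.length + 1 - z.length)).countP fun i =>
    decide ((u.drop i).take z.length = z)

/-- `k`-abelian equivalence: every nonempty word of length at most `k` occurs
equally often as a factor of `u` and of `v`. -/
def KAbEq {A : Type*} [DecidableEq A] (k : ℕ) (u v : List A) : Prop :=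
  ∀ z : List A, z ≠ [] → z.length ≤ k → FactorCount u z = FactorCount v z

section Helpers

variable {A : Type*} [DecidableEq A]

lemma fc_of_lt {u z : List A} (h : u.length < z.length) : FactorCount u z = 0 := by
  unfold FactorCount
  have h0 : u.length + 1 - z.length = 0 := by omega
  rw [h0]
  rfl

/-- Occurrences in `a ++ b` split into occurrences inside `a` and occurrences in
`suff_{|z|-1}(a) ++ b`. -/
lemma left_peel (a b z : List A) (hz : z ≠ []) :
    FactorCount (a ++ b) z =
      FactorCount a z + FactorCount (a.drop (a.length - (z.length - 1)) ++ b) z := by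
  have hm : 1 ≤ z.length := List.length_pos_iff.mpr hz
  by_cases ha : a.length < z.length
  · have h0 : a.length - (z.length - 1) = 0 := by omega
    rw [h0, List.drop_zero, fc_of_lt ha, Nat.zero_add]
  · push_neg at ha
    unfold FactorCount
    have L1 : (a ++ b).length + 1 - z.length
        = (a.length + 1 - z.length) + b.length := by
      rw [List.length_append]; omega
    have L2 : (a.drop (a.length - (z.length - 1)) ++ b).length + 1 - z.length
        = b.length := by
      rw [List.length_append, List.length_drop]; omega
    rw [L1, L2, List.range_add, List.countP_append, List.countP_map]
    congr 1
    · apply List.countP_congr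
      intro i hi
      rw [List.mem_range] at hi
      simp only [decide_eq_true_eq]
      rw [List.drop_append_of_le_length (by omega : i ≤ a.length),
        List.take_append_of_le_length (by rw [List.length_drop]; omega)]
    · apply List.countP_congr
      intro j hj
      rw [List.mem_range] at hj
      simp only [Function.comp_apply, decide_eq_true_eq]
      have e1 : (a ++ b).drop (a.length - (z.length - 1))
          = a.drop (a.length - (z.length - 1)) ++ b :=
        List.drop_append_of_le_length (by omega)
      have e2 : (a ++ b).drop (a.length + 1 - z.length + j)
          = (a.drop (a.length - (z.length - 1)) ++ b).drop j := by
        rw [← e1, List.drop_drop]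
        congr 1
        omega
      rw [e2]

/-- Occurrences in `a ++ b` split into occurrences inside `b` and occurrences in
`a ++ pref_{|z|-1}(b)`. -/
lemma right_peel (a b z : List A) (hz : z ≠ []) :
    FactorCount (a ++ b) z =
      FactorCount b z + FactorCount (a ++ b.take (z.length - 1)) z := by
  have hm : 1 ≤ z.length := List.length_pos_iff.mpr hz
  by_cases hb : b.length < z.length
  · rw [List.take_of_length_le (by omega : b.length ≤ z.length - 1), fc_of_lt hb,
      Nat.zero_add]
  · push_neg at hb
    unfold FactorCount
    have L1 : (a ++ b).length + 1 - z.length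
        = a.length + (b.length + 1 - z.length) := by
      rw [List.length_append]; omega
    have L2 : (a ++ b.take (z.length - 1)).length + 1 - z.length = a.length := by
      rw [List.length_append, List.length_take]; omega
    rw [L1, L2, List.range_add, List.countP_append, List.countP_map]
    rw [Nat.add_comm (List.countP _ (List.range a.length))]
    congr 1
    · apply List.countP_congr
      intro j hj
      rw [List.mem_range] at hj
      simp only [Function.comp_apply, decide_eq_true_eq]
      rw [List.drop_length_add_append]
    · apply List.countP_congr
      intro i hi
      rw [List.mem_range] at hi
      simp only [decide_eq_true_eq]
      rw [List.drop_append_of_le_length (by omega : i ≤ a.length),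
        List.drop_append_of_le_length (by omega : i ≤ a.length),
        List.take_append, List.take_append,
        List.length_drop, List.take_take,
        Nat.min_eq_left (by omega : z.length - (a.length - i) ≤ z.length - 1)]

omit [DecidableEq A] in
lemma drop_append_long (a u : List A) (n : ℕ) (h : n ≤ u.length) :
    (a ++ u).drop ((a ++ u).length - n) = u.drop (u.length - n) := by
  rw [List.length_append, List.drop_append,
    List.drop_eq_nil_of_le (by omega : a.length ≤ a.length + u.length - n),
    List.nil_append]
  congr 1
  omega

lemma core_swap (u v z : List A) (hz : z ≠ [])
    (hp : u.take (z.length - 1) = v.take (z.length - 1))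
    (hs : u.drop (u.length - (z.length - 1)) = v.drop (v.length - (z.length - 1)))
    (hul : z.length - 1 ≤ u.length) (hvl : z.length - 1 ≤ v.length)
    (a b : List A) :
    FactorCount (a ++ (u ++ (v ++ b))) z = FactorCount (a ++ (v ++ (u ++ b))) z := by
  have key : ∀ u' v' : List A, z.length - 1 ≤ u'.length → z.length - 1 ≤ v'.length →
      FactorCount (a ++ (u' ++ (v' ++ b))) z
        = FactorCount u' z + FactorCount (a ++ u'.take (z.length - 1)) z
          + FactorCount v' z
          + FactorCount (u'.drop (u'.length - (z.length - 1)) ++ v'.take (z.length - 1)) z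
          + FactorCount (v'.drop (v'.length - (z.length - 1)) ++ b) z := by
    intro u' v' hu' hv'
    have e0 : a ++ (u' ++ (v' ++ b)) = (a ++ u') ++ (v' ++ b) := by
      simp [List.append_assoc]
    rw [e0, left_peel (a ++ u') (v' ++ b) z hz,
      drop_append_long a u' (z.length - 1) hu',
      right_peel a u' z hz]
    have e1 : u'.drop (u'.length - (z.length - 1)) ++ (v' ++ b)
        = (u'.drop (u'.length - (z.length - 1)) ++ v') ++ b := by
      simp [List.append_assoc]
    rw [e1, left_peel _ b z hz,
      drop_append_long (u'.drop (u'.length - (z.length - 1))) v' (z.length - 1) hv',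
      right_peel (u'.drop (u'.length - (z.length - 1))) v' z hz]
    ring
  rw [key u v hul hvl, key v u hvl hul, hp, hs]
  ring

end Helpers

/-- If `u` and `v` have length at least `2k - 2` and share a common prefix of
length `k - 1` and a common suffix of length `k - 1`, then `uv ~_k vu`;
consequently `xuvy ~_k xvuy` for all words `x` and `y`. -/
theorem kAbEq_swap {A : Type*} [DecidableEq A] (k : ℕ) (hk : 1 ≤ k)
    (u v : List A) (hu : 2 * k - 2 ≤ u.length) (hv : 2 * k - 2 ≤ v.length)
    (hpre : u.take (k - 1) = v.take (k - 1))
    (hsuf : u.drop (u.length - (k - 1)) = v.drop (v.length - (k - 1))) :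
    KAbEq k (u ++ v) (v ++ u) ∧
    ∀ x y : List A, KAbEq k (x ++ u ++ v ++ y) (x ++ v ++ u ++ y) := by
  have main : ∀ x y : List A, KAbEq k (x ++ (u ++ (v ++ y))) (x ++ (v ++ (u ++ y))) := by
    intro x y z hz hzk
    have hm : 1 ≤ z.length := List.length_pos_iff.mpr hz
    have hul : z.length - 1 ≤ u.length := by omega
    have hvl : z.length - 1 ≤ v.length := by omega
    have hp : u.take (z.length - 1) = v.take (z.length - 1) := by
      have h := congrArg (List.take (z.length - 1)) hpre
      rwa [List.take_take, List.take_take,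
        Nat.min_eq_left (by omega : z.length - 1 ≤ k - 1)] at h
    have hs : u.drop (u.length - (z.length - 1))
        = v.drop (v.length - (z.length - 1)) := by
      have h := congrArg (List.drop ((k - 1) - (z.length - 1))) hsuf
      rwa [List.drop_drop, List.drop_drop,
        (by omega : u.length - (k - 1) + ((k - 1) - (z.length - 1))
          = u.length - (z.length - 1)),
        (by omega : v.length - (k - 1) + ((k - 1) - (z.length - 1))
          = v.length - (z.length - 1))] at h
    exact core_swap u v z hz hp hs hul hvl x y
  constructor
  · have h := main [] []
    simpa using h
  · intro x y
    have h := main x y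
    simpa [List.append_assoc] using h
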